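/- Del Moral's telescoping decomposition of the normalizing constant error: let μ_1, …, μ_n be probability measures on E with ∫_E W_q dμ_q > 0 for every 1 ≤ q ≤ n − 1, and set c_1 := 1 and c_q := ∏_{p=1}^{q−1} ∫_E W_p dμ_p for 2 ≤ q ≤ n. For q = 1 define Φ_1(μ_0)(ψ) := ∫_E ψ dν, and for 2 ≤ q ≤ n and a probability measure μ with ∫ W_{q−1} dμ > 0 define Φ_q(μ)(ψ) := (∫_E W_{q−1}(x) [∫_E ψ(y) κ_q(x, dy)] μ(dx)) / (∫_E W_{q−1} dμ). Define the Feynman–Kac semigroup Q_{q,n}(φ)(x) := ∫ φ(x_n) ∏_{s=q}^{n−1} W_s(x_s) κ_{q+1}(x_q, dx_{q+1}) ⋯ κ_n(x_{n−1}, dx_n), evaluated at x_q = x, with Q_{n,n}(φ) := φ. Then for every bounded measurable φ : E → ℝ, c_n ∫_E φ dμ_n − γ_n(φ) = Σ_{q=1}^n c_q [ ∫_E Q_{q,n}(φ) dμ_q − Φ_q(μ_{q−1})(Q_{q,n}(φ)) ]. -/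

import Mathlib

open MeasureTheory ProbabilityTheory

/-- The unnormalized Feynman–Kac marginal: `gammaFK ν κ W m φ` is
`γ_{m+1}(φ) = ∫ φ(x_{m+1}) ∏_{q=1}^{m} W_q(x_q) ν(dx_1) κ_2(x_1,dx_2) ⋯ κ_{m+1}(x_m,dx_{m+1})`,
so that `γ_p(φ) = gammaFK ν κ W (p - 1) φ` for `p ≥ 1` (and `γ_1 = ν`). -/
noncomputable def gammaFK {E : Type*} [MeasurableSpace E] (ν : Measure E)
    (κ : ℕ → Kernel E E) (W : ℕ → E → ℝ) : ℕ → (E → ℝ) → ℝ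
  | 0, φ => ∫ x, φ x ∂ν
  | m + 1, φ => gammaFK ν κ W m (fun x => W (m + 1) x * ∫ y, φ y ∂(κ (m + 2) x))

/-- The Feynman–Kac semigroup: `QFK κ W q k φ` is `Q_{q,q+k}(φ)`, i.e.
`Q_{q,n}(φ)(x) = ∫ φ(x_n) ∏_{s=q}^{n-1} W_s(x_s) κ_{q+1}(x_q,dx_{q+1}) ⋯ κ_n(x_{n-1},dx_n)`
evaluated at `x_q = x` (with `Q_{n,n}(φ) = φ`), so `Q_{q,n} = QFK κ W q (n - q)`. -/
noncomputable def QFK {E : Type*} [MeasurableSpace E]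
    (κ : ℕ → Kernel E E) (W : ℕ → E → ℝ) (q : ℕ) : ℕ → (E → ℝ) → E → ℝ
  | 0, φ => φ
  | k + 1, φ => QFK κ W q k (fun x => W (q + k) x * ∫ y, φ y ∂(κ (q + k + 1) x))

/-- The selection–mutation operator: `Φ_1(μ)(ψ) = ν(ψ)` and, for `q ≥ 2`,
`Φ_q(μ)(ψ) = μ(W_{q-1} κ_q(ψ)) / μ(W_{q-1})`. -/
noncomputable def PhiFK {E : Type*} [MeasurableSpace E] (ν : Measure E)
    (κ : ℕ → Kernel E E) (W : ℕ → E → ℝ) (q : ℕ) (μ : Measure E) (ψ : E → ℝ) : ℝ :=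
  if q ≤ 1 then ∫ x, ψ x ∂ν
  else (∫ x, W (q - 1) x * ∫ y, ψ y ∂(κ q x) ∂μ) / ∫ x, W (q - 1) x ∂μ

lemma QFK_succ_left {E : Type*} [MeasurableSpace E] (κ : ℕ → Kernel E E)
    (W : ℕ → E → ℝ) : ∀ (k q : ℕ) (φ : E → ℝ),
    QFK κ W q (k + 1) φ = fun x => W q x * ∫ y, QFK κ W (q + 1) k φ y ∂(κ (q + 1) x) := by
  intro k
  induction k with
  | zero => intro q φ; rfl
  | succ k ih =>
    intro q φ
    have h1 : q + (k + 1) = q + 1 + k := by omega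
    show QFK κ W q (k + 1) (fun x => W (q + (k + 1)) x * ∫ y, φ y ∂(κ (q + (k + 1) + 1) x)) = _
    rw [ih, h1]
    rfl

lemma gammaFK_eq_QFK {E : Type*} [MeasurableSpace E] (ν : Measure E)
    (κ : ℕ → Kernel E E) (W : ℕ → E → ℝ) : ∀ (m : ℕ) (φ : E → ℝ),
    gammaFK ν κ W m φ = ∫ x, QFK κ W 1 m φ x ∂ν := by
  intro m
  induction m with
  | zero => intro φ; rfl
  | succ m ih =>
    intro φ
    show gammaFK ν κ W m (fun x => W (m + 1) x * ∫ y, φ y ∂(κ (m + 2) x)) = _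
    rw [ih]
    show _ = ∫ x, QFK κ W 1 m (fun x => W (1 + m) x * ∫ y, φ y ∂(κ (1 + m + 1) x)) x ∂ν
    rw [Nat.add_comm 1 m]

/-- **Del Moral's telescoping decomposition of the normalizing constant error**: with
`c_q = ∏_{p=1}^{q-1} μ_p(W_p)`,
`c_n μ_n(φ) - γ_n(φ) = ∑_{q=1}^n c_q [μ_q(Q_{q,n}φ) - Φ_q(μ_{q-1})(Q_{q,n}φ)]`. -/
theorem del_moral_telescoping_decomposition
    {E : Type*} [MeasurableSpace E] (n : ℕ) (hn : 1 ≤ n)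
    (ν : Measure E) [IsProbabilityMeasure ν]
    (κ : ℕ → Kernel E E) (hκ : ∀ p, IsMarkovKernel (κ p))
    (W : ℕ → E → ℝ) (hWmeas : ∀ q, Measurable (W q))
    (hWnonneg : ∀ q x, 0 ≤ W q x) (hWbdd : ∀ q, ∃ M : ℝ, ∀ x, W q x ≤ M)
    (μ : ℕ → Measure E) (hμ : ∀ q, 1 ≤ q → q ≤ n → IsProbabilityMeasure (μ q))
    (hpos : ∀ q, 1 ≤ q → q ≤ n - 1 → 0 < ∫ x, W q x ∂(μ q))
    (φ : E → ℝ) (hφmeas : Measurable φ) (hφbdd : ∃ M : ℝ, ∀ x, |φ x| ≤ M) :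
    (∏ p ∈ Finset.Icc 1 (n - 1), ∫ x, W p x ∂(μ p)) * (∫ x, φ x ∂(μ n)) -
        gammaFK ν κ W (n - 1) φ =
      ∑ q ∈ Finset.Icc 1 n,
        (∏ p ∈ Finset.Icc 1 (q - 1), ∫ x, W p x ∂(μ p)) *
          ((∫ x, QFK κ W q (n - q) φ x ∂(μ q)) -
            PhiFK ν κ W q (μ (q - 1)) (QFK κ W q (n - q) φ)) := by
  classical
  set F : ℕ → ℝ := fun i =>
    if i = 0 then gammaFK ν κ W (n - 1) φ
    else (∏ p ∈ Finset.Icc 1 (i - 1), ∫ x, W p x ∂(μ p)) *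
      ∫ x, QFK κ W i (n - i) φ x ∂(μ i) with hF
  have key : ∀ q ∈ Finset.Icc 1 n,
      (∏ p ∈ Finset.Icc 1 (q - 1), ∫ x, W p x ∂(μ p)) *
        ((∫ x, QFK κ W q (n - q) φ x ∂(μ q)) -
          PhiFK ν κ W q (μ (q - 1)) (QFK κ W q (n - q) φ)) = F q - F (q - 1) := by
    intro q hq
    simp only [Finset.mem_Icc] at hq
    obtain ⟨hq1, hq2⟩ := hq
    match q, hq1 with
    | 1, _ =>
      simp only [hF, PhiFK, Nat.sub_self, if_pos (le_refl 1), if_pos rfl,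
        if_neg (by omega : (1 : ℕ) ≠ 0)]
      rw [gammaFK_eq_QFK]
      simp
    | (j + 2), _ =>
      have hj : j + 2 ≤ n := hq2
      have hw : (0 : ℝ) < ∫ x, W (j + 1) x ∂(μ (j + 1)) :=
        hpos (j + 1) (by omega) (by omega)
      have hsub : n - (j + 1) = (n - (j + 2)) + 1 := by omega
      have hQ : QFK κ W (j + 1) (n - (j + 1)) φ =
          fun x => W (j + 1) x * ∫ y, QFK κ W (j + 2) (n - (j + 2)) φ y ∂(κ (j + 2) x) := by
        rw [hsub, QFK_succ_left]
      have hPhi : PhiFK ν κ W (j + 2) (μ (j + 1)) (QFK κ W (j + 2) (n - (j + 2)) φ) =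
          (∫ x, QFK κ W (j + 1) (n - (j + 1)) φ x ∂(μ (j + 1))) /
            ∫ x, W (j + 1) x ∂(μ (j + 1)) := by
        rw [PhiFK, if_neg (by omega)]
        congr 1
        rw [hQ]
        rfl
      have hprod : (∏ p ∈ Finset.Icc 1 (j + 1), ∫ x, W p x ∂(μ p)) =
          (∏ p ∈ Finset.Icc 1 j, ∫ x, W p x ∂(μ p)) * ∫ x, W (j + 1) x ∂(μ (j + 1)) := by
        rw [Finset.prod_Icc_succ_top (by omega)]
      simp only [hF, if_neg (by omega : j + 2 ≠ 0), if_neg (by omega : j + 1 ≠ 0)]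
      have h21 : j + 2 - 1 = j + 1 := rfl
      have h11 : j + 1 - 1 = j := rfl
      rw [h21, h11, hPhi, hprod]
      simp only [if_neg (by omega : j + 1 ≠ 0)]
      field_simp
  rw [Finset.sum_congr rfl key]
  have tele : ∀ m : ℕ, ∑ q ∈ Finset.Icc 1 m, (F q - F (q - 1)) = F m - F 0 := by
    intro m
    induction m with
    | zero => simp
    | succ m ih =>
      rw [Finset.sum_Icc_succ_top (by omega), ih]
      simp only [Nat.add_sub_cancel]
      ring
  rw [tele]
  simp only [hF, if_neg (by omega : n ≠ 0), if_pos rfl]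
  have hnn : n - n = 0 := Nat.sub_self n
  rw [hnn]
  rfl
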